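/- Fix μ ∈ [0,2] and v ∈ (0,1), and set v₀ = μ/(2+μ), v₁ = 2/(2+μ). The function f(h₁,h₂) = μ·v·h₁ + v·h₁² + (1−v)·h₂² restricted to the set {(h₁,h₂) ∈ [0,1]² : v·h₁ + (1−v)·h₂ = v} attains its minimum uniquely at (h₁*,h₂*) = (0, v/(1−v)) if v ∈ (0,v₀], (h₁*,h₂*) = (v − (μ/2)(1−v), v + (μ/2)v) if v ∈ (v₀,v₁], and (h₁*,h₂*) = (2 − 1/v, 1) if v ∈ (v₁,1). -/

import Mathlib

open MeasureTheory Set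

noncomputable section

def IsCopula (C : ℝ → ℝ → ℝ) : Prop :=
  (∀ u ∈ Icc (0:ℝ) 1, ∀ v ∈ Icc (0:ℝ) 1, C u v ∈ Icc (0:ℝ) 1) ∧
  (∀ u ∈ Icc (0:ℝ) 1, C u 0 = 0 ∧ C u 1 = u) ∧
  (∀ v ∈ Icc (0:ℝ) 1, C 0 v = 0 ∧ C 1 v = v) ∧
  (∀ u₁ ∈ Icc (0:ℝ) 1, ∀ u₂ ∈ Icc (0:ℝ) 1, ∀ v₁ ∈ Icc (0:ℝ) 1, ∀ v₂ ∈ Icc (0:ℝ) 1,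
    u₁ ≤ u₂ → v₁ ≤ v₂ → 0 ≤ C u₂ v₂ - C u₁ v₂ - C u₂ v₁ + C u₁ v₁)

/-- The (a.e. defined) partial derivative of `C` with respect to its first argument. -/
def d1 (C : ℝ → ℝ → ℝ) (t v : ℝ) : ℝ := deriv (fun s => C s v) t

/-- Chatterjee's rank correlation. -/
def xi (C : ℝ → ℝ → ℝ) : ℝ :=
  6 * (∫ v in (0:ℝ)..1, ∫ t in (0:ℝ)..1, (d1 C t v) ^ 2) - 2

/-- Spearman's footrule. -/
def psi (C : ℝ → ℝ → ℝ) : ℝ :=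
  6 * (∫ v in (0:ℝ)..1, C v v) - 2

/-- Stochastically increasing: for each `v`, `t ↦ ∂₁C(t,v)` agrees a.e. on `[0,1]`
with a non-increasing function. -/
def IsSI (C : ℝ → ℝ → ℝ) : Prop :=
  ∀ v ∈ Icc (0:ℝ) 1, ∃ g : ℝ → ℝ, AntitoneOn g (Icc (0:ℝ) 1) ∧
    (∀ᵐ t ∂(volume.restrict (Icc (0:ℝ) 1)), d1 C t v = g t)

/-- Objective function `f(h₁,h₂) = μ·v·h₁ + v·h₁² + (1−v)·h₂²`. -/
def fObj (μ v : ℝ) (p : ℝ × ℝ) : ℝ := μ * v * p.1 + v * p.1 ^ 2 + (1 - v) * p.2 ^ 2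

/-- Constraint set `{(h₁,h₂) ∈ [0,1]² : v·h₁ + (1−v)·h₂ = v}`. -/
def constraintSet (v : ℝ) : Set (ℝ × ℝ) :=
  {p : ℝ × ℝ | p.1 ∈ Icc (0:ℝ) 1 ∧ p.2 ∈ Icc (0:ℝ) 1 ∧ v * p.1 + (1 - v) * p.2 = v}

/-- The claimed minimizer, by cases on `v` relative to `v₀ = μ/(2+μ)` and `v₁ = 2/(2+μ)`. -/
def minimizer (μ v : ℝ) : ℝ × ℝ :=
  if v ≤ μ / (2 + μ) then (0, v / (1 - v))
  else if v ≤ 2 / (2 + μ) then (v - μ / 2 * (1 - v), v + μ / 2 * v)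
  else (2 - 1 / v, 1)

set_option maxHeartbeats 1000000 in
/-- For `μ ∈ [0,2]`, `v ∈ (0,1)`, `fObj` restricted to the constraint set
attains its minimum uniquely at `minimizer μ v`. -/
theorem pointwise_minimizer_unique (μ v : ℝ) (hμ : μ ∈ Icc (0:ℝ) 2) (hv : v ∈ Ioo (0:ℝ) 1) :
    minimizer μ v ∈ constraintSet v ∧
    ∀ p ∈ constraintSet v,
      fObj μ v (minimizer μ v) ≤ fObj μ v p ∧
      (fObj μ v p = fObj μ v (minimizer μ v) → p = minimizer μ v) := by
  obtain ⟨hμ0, hμ2⟩ := hμ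
  obtain ⟨hv0, hv1⟩ := hv
  have h1v : (0:ℝ) < 1 - v := by linarith
  have hμp : (0:ℝ) < 2 + μ := by linarith
  unfold minimizer
  split_ifs with hc1 hc2
  · -- case v ≤ μ/(2+μ)
    have hvμ : v * (2 + μ) ≤ μ := (le_div_iff₀ hμp).mp hc1
    have hv2 : v ≤ 1 - v := by nlinarith
    refine ⟨⟨⟨le_refl 0, by norm_num⟩, ⟨by positivity, (div_le_one h1v).mpr hv2⟩, ?_⟩, ?_⟩
    · show v * 0 + (1 - v) * (v / (1 - v)) = v
      field_simp
      norm_num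
    · rintro ⟨a, b⟩ ⟨⟨ha0, ha1⟩, ⟨hb0, hb1⟩, hcon⟩
      simp only at hcon ha0 ha1 hb0 hb1
      have hb : b = (v - v * a) / (1 - v) := by
        field_simp
        linarith
      have key : fObj μ v (a, b) - fObj μ v (0, v / (1 - v)) =
          (v * a ^ 2 + a * (v * (μ - v * (2 + μ)))) / (1 - v) := by
        rw [hb]
        simp only [fObj]
        field_simp
        ring
      have hsub : 0 ≤ μ - v * (2 + μ) := by linarith
      have hnum : 0 ≤ v * a ^ 2 + a * (v * (μ - v * (2 + μ))) := by
        nlinarith [mul_nonneg hv0.le (sq_nonneg a), mul_nonneg (mul_nonneg ha0 hv0.le) hsub]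
      constructor
      · have := div_nonneg hnum h1v.le
        linarith
      · intro heq
        rw [heq, sub_self] at key
        have hnum0 : v * a ^ 2 + a * (v * (μ - v * (2 + μ))) = 0 := by
          field_simp at key
          linarith
        have hva : v * a ^ 2 = 0 := le_antisymm
          (by nlinarith [mul_nonneg (mul_nonneg ha0 hv0.le) hsub])
          (by positivity)
        have ha2 : a ^ 2 = 0 := (mul_eq_zero.mp hva).resolve_left hv0.ne'
        have ha : a = 0 := by
          have := pow_eq_zero_iff (n := 2) (by norm_num) |>.mp ha2
          exact this
        have hb2 : b = v / (1 - v) := by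
          rw [hb, ha]
          ring
        simp only [Prod.mk.injEq]
        exact ⟨ha, hb2⟩
  · -- case μ/(2+μ) < v ≤ 2/(2+μ)
    push_neg at hc1
    have hvμ : μ < v * (2 + μ) := (div_lt_iff₀ hμp).mp hc1
    have hvμ2 : v * (2 + μ) ≤ 2 := (le_div_iff₀ hμp).mp hc2
    refine ⟨⟨⟨by nlinarith, by nlinarith⟩, ⟨by nlinarith, by nlinarith⟩, by ring⟩, ?_⟩
    rintro ⟨a, b⟩ ⟨⟨ha0, ha1⟩, ⟨hb0, hb1⟩, hcon⟩
    simp only at hcon ha0 ha1 hb0 hb1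
    have hb : b = (v - v * a) / (1 - v) := by
      field_simp
      linarith
    have key : fObj μ v (a, b) - fObj μ v (v - μ / 2 * (1 - v), v + μ / 2 * v) =
        v / (1 - v) * (a - (v - μ / 2 * (1 - v))) ^ 2 := by
      rw [hb]
      simp only [fObj]
      field_simp
      ring
    have hq : 0 ≤ v / (1 - v) * (a - (v - μ / 2 * (1 - v))) ^ 2 := by positivity
    constructor
    · linarith
    · intro heq
      rw [heq, sub_self] at key
      have hvv : 0 < v / (1 - v) := by positivity
      have ha : a = v - μ / 2 * (1 - v) := by
        have h2 : (a - (v - μ / 2 * (1 - v))) ^ 2 = 0 := by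
          by_contra h
          have : 0 < (a - (v - μ / 2 * (1 - v))) ^ 2 :=
            lt_of_le_of_ne (sq_nonneg _) (Ne.symm h)
          nlinarith
        have := pow_eq_zero_iff (n := 2) (by norm_num) |>.mp h2
        linarith
      have hb2 : b = v + μ / 2 * v := by
        rw [hb, ha]
        field_simp
        ring
      simp only [Prod.mk.injEq]
      exact ⟨ha, hb2⟩
  · -- case 2/(2+μ) < v
    push_neg at hc2
    have hvμ : 2 < v * (2 + μ) := (div_lt_iff₀ hμp).mp hc2
    have hv12 : 1 / 2 < v := by nlinarith
    refine ⟨⟨⟨?_, ?_⟩, ⟨by norm_num, le_refl 1⟩, ?_⟩, ?_⟩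
    · have : 1 / v ≤ 2 := by
        rw [div_le_iff₀ hv0]
        linarith
      linarith
    · have : 1 ≤ 1 / v := by
        rw [le_div_iff₀ hv0]
        linarith
      linarith
    · show v * (2 - 1 / v) + (1 - v) * 1 = v
      field_simp
      ring
    · rintro ⟨a, b⟩ ⟨⟨ha0, ha1⟩, ⟨hb0, hb1⟩, hcon⟩
      simp only at hcon ha0 ha1 hb0 hb1
      have hb : b = (v - v * a) / (1 - v) := by
        field_simp
        linarith
      have has : 2 - 1 / v ≤ a := by
        have h1 : v - v * a ≤ 1 - v := by nlinarith
        refine le_of_mul_le_mul_right ?_ hv0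
        have hvv : 1 / v * v = 1 := by field_simp
        nlinarith
      have key : fObj μ v (a, b) - fObj μ v (2 - 1 / v, 1) =
          v / (1 - v) * (a - (2 - 1 / v)) ^ 2 + (a - (2 - 1 / v)) * (v * (2 + μ) - 2) := by
        rw [hb]
        simp only [fObj]
        field_simp
        ring
      have hq : 0 ≤ v / (1 - v) * (a - (2 - 1 / v)) ^ 2 := by positivity
      have hl : 0 ≤ (a - (2 - 1 / v)) * (v * (2 + μ) - 2) := by nlinarith
      constructor
      · linarith
      · intro heq
        rw [heq, sub_self] at key
        have hvv : 0 < v / (1 - v) := by positivity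
        have ha : a = 2 - 1 / v := by
          have h2 : (a - (2 - 1 / v)) ^ 2 = 0 := by
            by_contra h
            have : 0 < (a - (2 - 1 / v)) ^ 2 :=
              lt_of_le_of_ne (sq_nonneg _) (Ne.symm h)
            nlinarith
          have := pow_eq_zero_iff (n := 2) (by norm_num) |>.mp h2
          linarith
        have hb2 : b = 1 := by
          rw [hb, ha]
          field_simp
          ring
        simp only [Prod.mk.injEq]
        exact ⟨ha, hb2⟩
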